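/- For integers 1 ≤ i ≤ min(k, ℓ), the generating function ∑_λ q^{|λ|} over i-vacant partitions λ contained in the ℓ × k rectangle equals q^i · qbinom(k, i) · ∑_{j=0}^{ℓ-i} q^{j(k-i+1)} · qbinom(i+j-1, j). -/

import Mathlib

open Polynomial

open scoped Classical

/-- The Gaussian binomial coefficient as a polynomial in `q`. -/
noncomputable def qbinom : ℕ → ℕ → Polynomial ℤ
  | _, 0 => 1
  | 0, _ + 1 => 0
  | a + 1, b + 1 => qbinom a b + X ^ (b + 1) * qbinom a (b + 1)

/-- A partition inside the `ℓ × k` rectangle, encoded as a weakly decreasing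
function `Fin ℓ → Fin (k+1)`. -/
def RectPartition (ℓ k : ℕ) (f : Fin ℓ → Fin (k + 1)) : Prop :=
  ∀ a b : Fin ℓ, a ≤ b → f b ≤ f a

/-- The number of nonzero parts of `f`. -/
noncomputable def plen {ℓ k : ℕ} (f : Fin ℓ → Fin (k + 1)) : ℕ :=
  (Finset.univ.filter (fun a => 0 < (f a : ℕ))).card

/-- The complement of `f` in the rectangle `(k^{plen f})` contains an
`m × (m-1)` rectangle in its southeast corner: `m ≤ plen f` and each of the
last `m` nonzero rows has length at most `k - m + 1`. -/
def ContainsSE {ℓ k : ℕ} (f : Fin ℓ → Fin (k + 1)) (m : ℕ) : Prop :=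
  m ≤ plen f ∧ ∀ a : Fin ℓ, (a : ℕ) < plen f → plen f ≤ (a : ℕ) + m → (f a : ℕ) + m ≤ k + 1

/-- `f` is `i`-vacant: `i` is the largest integer such that the complement of
`f` in `(k^{plen f})` contains an `i × (i-1)` rectangle in its southeast corner. -/
def IsVacant {ℓ k : ℕ} (i : ℕ) (f : Fin ℓ → Fin (k + 1)) : Prop :=
  ContainsSE f i ∧ ¬ ContainsSE f (i + 1)

noncomputable def S (m n : ℕ) : Polynomial ℤ :=
  ∑ f ∈ Finset.univ.filter (fun f : Fin m → Fin (n + 1) => RectPartition m n f),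
    X ^ (∑ a, (f a : ℕ))
lemma S_succ_succ (m n : ℕ) : S (m+1) (n+1) = S m (n+1) + X ^ (m+1) * S (m+1) n := by
  have hpos : ∀ (f : Fin (m+1) → Fin (n+2)), RectPartition (m+1) (n+1) f →
      ¬ f (Fin.last m) = 0 → ∀ a, (0:ℕ) < (f a : ℕ) := by
    intro f hf hlast a
    have h2 : f (Fin.last m) ≤ f a := hf a (Fin.last m) (Fin.le_last a)
    have h0 : (0:ℕ) < (f (Fin.last m) : ℕ) :=
      Nat.pos_of_ne_zero (fun h => hlast (Fin.ext (by simp [h])))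
    exact lt_of_lt_of_le h0 h2
  rw [S, ← Finset.sum_filter_add_sum_filter_not _ (fun f => f (Fin.last m) = 0)]
  congr 1
  · rw [S]
    refine Finset.sum_nbij' (i := fun f => f ∘ Fin.castSucc)
      (j := fun g => Fin.snoc g 0) ?_ ?_ ?_ ?_ ?_
    · intro f hf
      simp only [Finset.mem_filter, Finset.mem_univ, true_and] at hf ⊢
      exact fun a b hab => hf.1 (a.castSucc) (b.castSucc) (by simpa using hab)
    · intro g hg
      simp only [Finset.mem_filter, Finset.mem_univ, true_and] at hg ⊢
      have hs : ∀ (x : Fin (m+1)) (hx : (x:ℕ) < m),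
          (Fin.snoc g 0 : Fin (m+1) → Fin (n+1+1)) x = g ⟨(x:ℕ), hx⟩ := by
        intro x hx
        simp [Fin.snoc, hx]
        rfl
      constructor
      · intro a b hab
        by_cases hb : (b:ℕ) < m
        · have ha : (a:ℕ) < m := lt_of_le_of_lt hab hb
          rw [hs a ha, hs b hb]
          exact hg _ _ hab
        · have hbl : b = Fin.last m := Fin.ext (by have := b.isLt; simp [Fin.last]; omega)
          rw [hbl, Fin.snoc_last]
          exact Fin.zero_le _
      · simp [Fin.snoc_last]
    · intro f hf
      simp only [Finset.mem_filter, Finset.mem_univ, true_and] at hf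
      funext a
      refine Fin.lastCases ?_ (fun c => ?_) a
      · simp [Fin.snoc_last, hf.2]
      · simp [Fin.snoc_castSucc]
    · intro g hg
      funext a
      simp [Fin.snoc_castSucc]
    · intro f hf
      simp only [Finset.mem_filter, Finset.mem_univ, true_and] at hf
      rw [Fin.sum_univ_castSucc]
      have : ((f (Fin.last m) : ℕ)) = 0 := by rw [hf.2]; rfl
      simp [this]
  · rw [S, Finset.mul_sum]
    refine Finset.sum_nbij'
      (i := fun f a => (⟨(f a : ℕ) - 1, by have := (f a).isLt; omega⟩ : Fin (n + 1)))
      (j := fun g a => (g a).succ) ?_ ?_ ?_ ?_ ?_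
    · intro f hf
      simp only [Finset.mem_filter, Finset.mem_univ, true_and] at hf ⊢
      intro a b hab
      have h1 : f b ≤ f a := hf.1 a b hab
      have h3 := hpos f hf.1 hf.2
      simp only [Fin.le_def, Fin.mk_le_mk] at h1 ⊢
      have := h3 b
      omega
    · intro g hg
      simp only [Finset.mem_filter, Finset.mem_univ, true_and] at hg ⊢
      constructor
      · intro a b hab
        have := hg a b hab
        simp only [Fin.le_def, Fin.val_succ] at this ⊢
        omega
      · intro h
        have : ((g (Fin.last m)).succ : ℕ) = 0 := by rw [h]; rfl
        simp [Fin.val_succ] at this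
    · intro f hf
      simp only [Finset.mem_filter, Finset.mem_univ, true_and] at hf
      have h3 := hpos f hf.1 hf.2
      funext a
      apply Fin.ext
      simp only [Fin.val_succ]
      have := h3 a
      omega
    · intro g hg
      funext a
      apply Fin.ext
      simp [Fin.val_succ]
    · intro f hf
      simp only [Finset.mem_filter, Finset.mem_univ, true_and] at hf
      have h3 := hpos f hf.1 hf.2
      have hsum : (∑ a, ((f a : ℕ))) = (∑ a, ((f a : ℕ) - 1)) + (m + 1) := by
        calc (∑ a, ((f a : ℕ))) = ∑ a, (((f a : ℕ) - 1) + 1) :=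
              Finset.sum_congr rfl (fun a _ => by have := h3 a; omega)
        _ = (∑ a, ((f a : ℕ) - 1)) + (m + 1) := by
              rw [Finset.sum_add_distrib]
              simp
      simp only [hsum]
      rw [pow_add]
      ring
lemma qbinom_zero (n : ℕ) : qbinom n 0 = 1 := by cases n <;> rfl
lemma qbinom_lt : ∀ {n m : ℕ}, n < m → qbinom n m = 0
  | 0, m + 1, _ => rfl
  | n + 1, m + 1, h => by
    rw [qbinom, qbinom_lt (by omega), qbinom_lt (by omega)]
    ring
lemma qbinom_self (n : ℕ) : qbinom n n = 1 := by
  induction n with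
  | zero => rfl
  | succ n ih => rw [qbinom, ih, qbinom_lt (by omega)]; ring
lemma S_zero_left (n : ℕ) : S 0 n = 1 := by
  have h : Finset.univ.filter (fun f : Fin 0 → Fin (n + 1) => RectPartition 0 n f)
      = Finset.univ := Finset.filter_true_of_mem (fun f _ => fun a => a.elim0)
  rw [S, h]
  simp
lemma S_zero_right (m : ℕ) : S m 0 = 1 := by
  have h : Finset.univ.filter (fun f : Fin m → Fin 1 => RectPartition m 0 f)
      = Finset.univ := Finset.filter_true_of_mem
        (fun f _ => fun a b _ => by omega)
  rw [S, h]
  have : ∀ f : Fin m → Fin 1, (∑ a, (f a : ℕ)) = 0 := by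
    intro f; exact Finset.sum_eq_zero fun a _ => by omega
  simp only [this, pow_zero]
  simp
lemma S_eq (m n : ℕ) : S m n = qbinom (m + n) m := by
  induction m generalizing n with
  | zero => rw [S_zero_left, Nat.zero_add, qbinom_zero]
  | succ m ih =>
    induction n with
    | zero => rw [S_zero_right, Nat.add_zero, qbinom_self]
    | succ n ihn =>
      rw [S_succ_succ, ih (n+1), ihn,
        show m + (n+1) = m+n+1 from by omega, show m+1+n = m+n+1 from by omega,
        show m+1+(n+1) = (m+n+1)+1 from by omega]
      conv_rhs => rw [qbinom]
lemma lt_plen_iff {ℓ k : ℕ} (f : Fin ℓ → Fin (k + 1)) (hf : RectPartition ℓ k f)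
    (a : Fin ℓ) : (a : ℕ) < plen f ↔ 0 < (f a : ℕ) := by
  constructor
  · intro h
    by_contra hz
    have hsub : (Finset.univ.filter (fun b : Fin ℓ => 0 < (f b : ℕ))) ⊆ Finset.Iio a := by
      intro b hb
      simp only [Finset.mem_filter, Finset.mem_univ, true_and] at hb
      rw [Finset.mem_Iio]
      by_contra hba
      have h2 : (f b : ℕ) ≤ (f a : ℕ) := Fin.le_def.mp (hf a b (le_of_not_gt hba))
      omega
    have := Finset.card_le_card hsub
    rw [Fin.card_Iio] at this
    rw [plen] at h
    omega
  · intro h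
    have hsub : Finset.Iic a ⊆ Finset.univ.filter (fun b : Fin ℓ => 0 < (f b : ℕ)) := by
      intro b hb
      simp only [Finset.mem_Iic] at hb
      simp only [Finset.mem_filter, Finset.mem_univ, true_and]
      have h2 : (f a : ℕ) ≤ (f b : ℕ) := Fin.le_def.mp (hf b a hb)
      omega
    have := Finset.card_le_card hsub
    rw [Fin.card_Iic] at this
    rw [plen]
    omega
lemma plen_le {ℓ k : ℕ} (f : Fin ℓ → Fin (k + 1)) : plen f ≤ ℓ := by
  rw [plen]
  exact le_trans (Finset.card_filter_le _ _) (by simp)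
lemma card_filter_lt {ℓ m : ℕ} (hm : m ≤ ℓ) :
    (Finset.univ.filter (fun a : Fin ℓ => (a : ℕ) < m)).card = m := by
  have h : (Finset.univ.filter (fun a : Fin ℓ => (a : ℕ) < m))
      = Finset.attachFin (Finset.range m)
        (fun x hx => lt_of_lt_of_le (Finset.mem_range.mp hx) hm) := by
    ext a
    simp [Finset.mem_attachFin]
  rw [h, Finset.card_attachFin, Finset.card_range]
def glue (ℓ k i j : ℕ) (hk : i ≤ k) (h1 : 1 ≤ i)
    (g : Fin i → Fin (k - i + 1)) (h : Fin j → Fin (i - 1 + 1)) : Fin ℓ → Fin (k + 1) :=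
  fun a =>
    if ha : (a : ℕ) < j then
      ⟨k - i + 1 + (h ⟨a, ha⟩ : ℕ), by have := (h ⟨a, ha⟩).isLt; omega⟩
    else if ha2 : (a : ℕ) < i + j then
      ⟨1 + (g ⟨(a : ℕ) - j, by omega⟩ : ℕ), by have := (g ⟨(a : ℕ) - j, by omega⟩).isLt; omega⟩
    else 0
lemma glue_val_lo {ℓ k i j : ℕ} (hk : i ≤ k) (h1 : 1 ≤ i)
    (g : Fin i → Fin (k - i + 1)) (h : Fin j → Fin (i - 1 + 1)) (a : Fin ℓ)
    (ha : (a : ℕ) < j) :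
    (glue ℓ k i j hk h1 g h a : ℕ) = k - i + 1 + (h ⟨a, ha⟩ : ℕ) := by
  simp [glue, ha]
lemma glue_val_mid {ℓ k i j : ℕ} (hk : i ≤ k) (h1 : 1 ≤ i)
    (g : Fin i → Fin (k - i + 1)) (h : Fin j → Fin (i - 1 + 1)) (a : Fin ℓ)
    (haj : ¬ (a : ℕ) < j) (ha2 : (a : ℕ) < i + j) :
    (glue ℓ k i j hk h1 g h a : ℕ) = 1 + (g ⟨(a : ℕ) - j, by omega⟩ : ℕ) := by
  simp [glue, haj, ha2]
lemma glue_val_hi {ℓ k i j : ℕ} (hk : i ≤ k) (h1 : 1 ≤ i)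
    (g : Fin i → Fin (k - i + 1)) (h : Fin j → Fin (i - 1 + 1)) (a : Fin ℓ)
    (ha : i + j ≤ (a : ℕ)) :
    (glue ℓ k i j hk h1 g h a : ℕ) = 0 := by
  have h1' : ¬ (a : ℕ) < j := by omega
  have h2' : ¬ (a : ℕ) < i + j := by omega
  simp [glue, h1', h2']
lemma glue_rect {ℓ k i j : ℕ} (hk : i ≤ k) (h1 : 1 ≤ i)
    {g : Fin i → Fin (k - i + 1)} {h : Fin j → Fin (i - 1 + 1)}
    (hg : RectPartition i (k - i) g) (hh : RectPartition j (i - 1) h) :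
    RectPartition ℓ k (glue ℓ k i j hk h1 g h) := by
  intro a b hab
  have hab' : (a : ℕ) ≤ (b : ℕ) := Fin.le_def.mp hab
  rw [Fin.le_def]
  by_cases hbj : (b : ℕ) < j
  · have haj : (a : ℕ) < j := by omega
    rw [glue_val_lo hk h1 g h a haj, glue_val_lo hk h1 g h b hbj]
    have := Fin.le_def.mp (hh ⟨a, haj⟩ ⟨b, hbj⟩ (by rw [Fin.le_def]; exact hab'))
    omega
  · by_cases hbi : (b : ℕ) < i + j
    · rw [glue_val_mid hk h1 g h b hbj hbi]
      by_cases haj : (a : ℕ) < j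
      · rw [glue_val_lo hk h1 g h a haj]
        have := (g ⟨(b : ℕ) - j, by omega⟩).isLt
        omega
      · rw [glue_val_mid hk h1 g h a haj (by omega)]
        have := Fin.le_def.mp (hg ⟨(a : ℕ) - j, by omega⟩ ⟨(b : ℕ) - j, by omega⟩
          (by rw [Fin.le_def]; simp; omega))
        omega
    · rw [glue_val_hi hk h1 g h b (by omega)]
      omega
lemma glue_plen {ℓ k i j : ℕ} (hk : i ≤ k) (h1 : 1 ≤ i) (hij : i + j ≤ ℓ)
    (g : Fin i → Fin (k - i + 1)) (h : Fin j → Fin (i - 1 + 1)) :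
    plen (glue ℓ k i j hk h1 g h) = i + j := by
  rw [plen]
  have e : Finset.univ.filter (fun a : Fin ℓ => 0 < ((glue ℓ k i j hk h1 g h) a : ℕ))
      = Finset.univ.filter (fun a : Fin ℓ => (a : ℕ) < i + j) := by
    ext a
    simp only [Finset.mem_filter, Finset.mem_univ, true_and]
    constructor
    · intro ha
      by_contra hc
      rw [glue_val_hi hk h1 g h a (by omega)] at ha
      omega
    · intro ha
      by_cases haj : (a : ℕ) < j
      · rw [glue_val_lo hk h1 g h a haj]; omega
      · rw [glue_val_mid hk h1 g h a haj ha]; omega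
  rw [e, card_filter_lt hij]
lemma glue_vacant {ℓ k i j : ℕ} (hk : i ≤ k) (h1 : 1 ≤ i) (hij : i + j ≤ ℓ)
    (g : Fin i → Fin (k - i + 1)) (h : Fin j → Fin (i - 1 + 1)) :
    IsVacant i (glue ℓ k i j hk h1 g h) := by
  have hp := glue_plen hk h1 hij g h
  constructor
  · constructor
    · omega
    · intro a ha1 ha2
      rw [hp] at ha1 ha2
      rw [glue_val_mid hk h1 g h a (by omega) (by omega)]
      have := (g ⟨(a : ℕ) - j, by omega⟩).isLt
      omega
  · rintro ⟨hc1, hc2⟩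
    rw [hp] at hc1 hc2
    have hj1 : 1 ≤ j := by omega
    have := hc2 ⟨j - 1, by omega⟩ (by simp; omega) (by simp; omega)
    rw [glue_val_lo hk h1 g h _ (by simp; omega)] at this
    omega
lemma sum_glue {ℓ k i j : ℕ} (hk : i ≤ k) (h1 : 1 ≤ i) (hij : i + j ≤ ℓ)
    (g : Fin i → Fin (k - i + 1)) (h : Fin j → Fin (i - 1 + 1)) :
    (∑ a, ((glue ℓ k i j hk h1 g h) a : ℕ))
      = (i + j * (k - i + 1)) + ((∑ b, (g b : ℕ)) + (∑ a, (h a : ℕ))) := by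
  set F : ℕ → ℕ := fun t => if ht : t < ℓ then ((glue ℓ k i j hk h1 g h) ⟨t, ht⟩ : ℕ) else 0
    with hF
  have e0 : (∑ a, ((glue ℓ k i j hk h1 g h) a : ℕ)) = ∑ t ∈ Finset.range ℓ, F t := by
    rw [← Fin.sum_univ_eq_sum_range]
    refine Finset.sum_congr rfl (fun a _ => ?_)
    rw [hF]
    simp [a.isLt]
  have e1 : ∑ t ∈ Finset.range ℓ, F t
      = (∑ t ∈ Finset.Ico 0 j, F t) + (∑ t ∈ Finset.Ico j (i + j), F t)
        + (∑ t ∈ Finset.Ico (i + j) ℓ, F t) := by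
    rw [Finset.sum_Ico_consecutive F (by omega : 0 ≤ j) (by omega : j ≤ i + j),
      Finset.sum_Ico_consecutive F (by omega : 0 ≤ i + j) (by omega : i + j ≤ ℓ),
      ← Finset.range_eq_Ico]
  have e2 : (∑ t ∈ Finset.Ico (i + j) ℓ, F t) = 0 := by
    refine Finset.sum_eq_zero (fun t ht => ?_)
    rw [Finset.mem_Ico] at ht
    rw [hF]
    simp only [ht.2, dif_pos]
    exact glue_val_hi hk h1 g h _ (by simpa using ht.1)
  have e3 : (∑ t ∈ Finset.Ico 0 j, F t) = j * (k - i + 1) + (∑ a, (h a : ℕ)) := by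
    rw [← Finset.range_eq_Ico]
    have : ∀ t ∈ Finset.range j, F t = (k - i + 1) + (fun t : ℕ =>
        if ht : t < j then (h ⟨t, ht⟩ : ℕ) else 0) t := by
      intro t ht
      rw [Finset.mem_range] at ht
      rw [hF]
      simp only [dif_pos (by omega : t < ℓ), dif_pos ht]
      exact glue_val_lo hk h1 g h _ ht
    rw [Finset.sum_congr rfl this, Finset.sum_add_distrib, Finset.sum_const,
      Finset.card_range, smul_eq_mul, ← Fin.sum_univ_eq_sum_range]
    congr 1
    refine Finset.sum_congr rfl (fun a _ => ?_)
    simp [a.isLt]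
  have e4 : (∑ t ∈ Finset.Ico j (i + j), F t) = i + (∑ b, (g b : ℕ)) := by
    rw [Finset.sum_Ico_eq_sum_range]
    have h2 : i + j - j = i := by omega
    rw [h2]
    have : ∀ t ∈ Finset.range i, F (j + t) = 1 + (fun t : ℕ =>
        if ht : t < i then (g ⟨t, ht⟩ : ℕ) else 0) t := by
      intro t ht
      rw [Finset.mem_range] at ht
      rw [hF]
      simp only [dif_pos (by omega : j + t < ℓ), dif_pos ht]
      rw [glue_val_mid hk h1 g h _ (by simp only [Fin.val_mk]; omega)
        (by simp only [Fin.val_mk]; omega)]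
      have e : (⟨j + t - j, by omega⟩ : Fin i) = (⟨t, ht⟩ : Fin i) := by
        apply Fin.ext
        simp only [Fin.val_mk]
        omega
      rw [e]
    rw [Finset.sum_congr rfl this, Finset.sum_add_distrib, Finset.sum_const,
      Finset.card_range, smul_eq_mul, mul_one, ← Fin.sum_univ_eq_sum_range]
    congr 1
    refine Finset.sum_congr rfl (fun a _ => ?_)
    simp [a.isLt]
  rw [e0, e1, e2, e3, e4]
  ring
def toG (ℓ k i j : ℕ) (hij : i + j ≤ ℓ) (f : Fin ℓ → Fin (k + 1)) :
    Fin i → Fin (k - i + 1) :=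
  fun b => ⟨min (k - i) ((f ⟨j + (b : ℕ), by have := b.isLt; omega⟩ : ℕ) - 1), by omega⟩
def toH (ℓ k i j : ℕ) (hij : i + j ≤ ℓ) (h1 : 1 ≤ i) (f : Fin ℓ → Fin (k + 1)) :
    Fin j → Fin (i - 1 + 1) :=
  fun a => ⟨min (i - 1) ((f ⟨(a : ℕ), by have := a.isLt; omega⟩ : ℕ) - (k - i + 1)), by omega⟩
lemma vacant_facts {ℓ k i j : ℕ} (h1 : 1 ≤ i) (hk : i ≤ k)
    {f : Fin ℓ → Fin (k + 1)} (hr : RectPartition ℓ k f) (hv : IsVacant i f)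
    (hp : plen f = i + j) :
    (∀ a : Fin ℓ, (a : ℕ) < j → k - i + 1 ≤ (f a : ℕ)) ∧
    (∀ a : Fin ℓ, j ≤ (a : ℕ) → (a : ℕ) < i + j → 1 ≤ (f a : ℕ) ∧ (f a : ℕ) ≤ k - i + 1) ∧
    (∀ a : Fin ℓ, i + j ≤ (a : ℕ) → (f a : ℕ) = 0) := by
  refine ⟨?_, ?_, ?_⟩
  · intro a ha
    have h2 := hv.2
    rw [ContainsSE] at h2
    push_neg at h2
    obtain ⟨b, hb1, hb2, hb3⟩ := h2 (by omega)
    rw [hp] at hb1 hb2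
    have hab : (a : ℕ) ≤ (b : ℕ) := by omega
    have := Fin.le_def.mp (hr a b (Fin.le_def.mpr hab))
    omega
  · intro a ha1 ha2
    have hlow : 0 < (f a : ℕ) := (lt_plen_iff f hr a).mp (by omega)
    have hup := hv.1.2 a (by omega) (by omega)
    omega
  · intro a ha
    have := (lt_plen_iff f hr a)
    omega
lemma glue_toGH {ℓ k i j : ℕ} (hk : i ≤ k) (h1 : 1 ≤ i) (hij : i + j ≤ ℓ)
    {f : Fin ℓ → Fin (k + 1)} (hr : RectPartition ℓ k f) (hv : IsVacant i f)
    (hp : plen f = i + j) :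
    glue ℓ k i j hk h1 (toG ℓ k i j hij f) (toH ℓ k i j hij h1 f) = f := by
  obtain ⟨flo, fmid, fhi⟩ := vacant_facts h1 hk hr hv hp
  funext a
  apply Fin.ext
  by_cases haj : (a : ℕ) < j
  · rw [glue_val_lo hk h1 _ _ a haj]
    have e : (⟨((⟨(a : ℕ), haj⟩ : Fin j) : ℕ), by have := a.isLt; omega⟩ : Fin ℓ) = a :=
      Fin.ext rfl
    simp only [toH, e]
    have := flo a haj
    have := a.isLt
    have := (f a).isLt
    try simp only [Fin.val_mk]
    omega
  · by_cases hai : (a : ℕ) < i + j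
    · rw [glue_val_mid hk h1 _ _ a haj hai]
      simp only [toG]
      have e : (⟨j + ((⟨(a : ℕ) - j, by omega⟩ : Fin i) : ℕ), by omega⟩ : Fin ℓ) = a :=
        Fin.ext (by simp only [Fin.val_mk]; omega)
      rw [e]
      have := fmid a (by omega) hai
      try simp only [Fin.val_mk]
      omega
    · rw [glue_val_hi hk h1 _ _ a (by omega)]
      exact (fhi a (by omega)).symm
lemma toG_glue {ℓ k i j : ℕ} (hk : i ≤ k) (h1 : 1 ≤ i) (hij : i + j ≤ ℓ)
    (g : Fin i → Fin (k - i + 1)) (h : Fin j → Fin (i - 1 + 1)) :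
    toG ℓ k i j hij (glue ℓ k i j hk h1 g h) = g := by
  funext b
  apply Fin.ext
  simp only [toG, Fin.val_mk]
  rw [glue_val_mid hk h1 g h _ (by simp only [Fin.val_mk]; omega)
    (by simp only [Fin.val_mk]; have := b.isLt; omega)]
  have e : (⟨((⟨j + (b : ℕ), by have := b.isLt; omega⟩ : Fin ℓ) : ℕ) - j, by
      have := b.isLt; simp only [Fin.val_mk]; omega⟩ : Fin i) = b :=
    Fin.ext (by simp only [Fin.val_mk]; omega)
  rw [e]
  have := (g b).isLt
  omega
lemma toH_glue {ℓ k i j : ℕ} (hk : i ≤ k) (h1 : 1 ≤ i) (hij : i + j ≤ ℓ)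
    (g : Fin i → Fin (k - i + 1)) (h : Fin j → Fin (i - 1 + 1)) :
    toH ℓ k i j hij h1 (glue ℓ k i j hk h1 g h) = h := by
  funext a
  apply Fin.ext
  simp only [toH, Fin.val_mk]
  rw [glue_val_lo hk h1 g h _ (by simp only [Fin.val_mk]; exact a.isLt)]
  have e : (⟨((⟨(a : ℕ), by have := a.isLt; omega⟩ : Fin ℓ) : ℕ), by
      simp only [Fin.val_mk]; exact a.isLt⟩ : Fin j) = a := Fin.ext rfl
  rw [e]
  have := (h a).isLt
  omega
lemma toG_rect {ℓ k i j : ℕ} (hij : i + j ≤ ℓ)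
    {f : Fin ℓ → Fin (k + 1)} (hr : RectPartition ℓ k f) :
    RectPartition i (k - i) (toG ℓ k i j hij f) := by
  intro b b' hbb
  rw [Fin.le_def]
  simp only [toG, Fin.val_mk]
  have := Fin.le_def.mp (hr ⟨j + (b : ℕ), by have := b.isLt; omega⟩
    ⟨j + (b' : ℕ), by have := b'.isLt; omega⟩
    (Fin.le_def.mpr (by simp only [Fin.val_mk]; exact Nat.add_le_add_left (Fin.le_def.mp hbb) j)))
  omega
lemma toH_rect {ℓ k i j : ℕ} (hij : i + j ≤ ℓ) (h1 : 1 ≤ i)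
    {f : Fin ℓ → Fin (k + 1)} (hr : RectPartition ℓ k f) :
    RectPartition j (i - 1) (toH ℓ k i j hij h1 f) := by
  intro a a' haa
  rw [Fin.le_def]
  simp only [toH, Fin.val_mk]
  have := Fin.le_def.mp (hr ⟨(a : ℕ), by have := a.isLt; omega⟩
    ⟨(a' : ℕ), by have := a'.isLt; omega⟩ (Fin.le_def.mpr (by exact Fin.le_def.mp haa)))
  omega
lemma fiber_eq (k ℓ i j : ℕ) (h1 : 1 ≤ i) (hk : i ≤ k) (hij : i + j ≤ ℓ) :
    ∑ f ∈ Finset.univ.filter (fun f : Fin ℓ → Fin (k + 1) =>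
        (RectPartition ℓ k f ∧ IsVacant i f) ∧ plen f = i + j),
      (X : Polynomial ℤ) ^ (∑ a, (f a : ℕ))
    = ∑ p ∈ (Finset.univ.filter
          (fun g : Fin i → Fin (k - i + 1) => RectPartition i (k - i) g)) ×ˢ
        (Finset.univ.filter
          (fun h : Fin j → Fin (i - 1 + 1) => RectPartition j (i - 1) h)),
      (X : Polynomial ℤ) ^
        ((i + j * (k - i + 1)) + ((∑ b, (p.1 b : ℕ)) + (∑ a, (p.2 a : ℕ)))) := by
  refine Finset.sum_nbij'
    (i := fun f => (toG ℓ k i j hij f, toH ℓ k i j hij h1 f))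
    (j := fun p => glue ℓ k i j hk h1 p.1 p.2) ?_ ?_ ?_ ?_ ?_
  · intro f hf
    simp only [Finset.mem_filter, Finset.mem_univ, true_and, Finset.mem_product] at hf ⊢
    exact ⟨toG_rect hij hf.1.1, toH_rect hij h1 hf.1.1⟩
  · intro p hp
    simp only [Finset.mem_filter, Finset.mem_univ, true_and, Finset.mem_product] at hp ⊢
    exact ⟨⟨glue_rect hk h1 hp.1 hp.2, glue_vacant hk h1 hij p.1 p.2⟩,
      glue_plen hk h1 hij p.1 p.2⟩
  · intro f hf
    simp only [Finset.mem_filter, Finset.mem_univ, true_and] at hf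
    exact glue_toGH hk h1 hij hf.1.1 hf.1.2 hf.2
  · intro p hp
    exact Prod.ext (toG_glue hk h1 hij p.1 p.2) (toH_glue hk h1 hij p.1 p.2)
  · intro f hf
    simp only [Finset.mem_filter, Finset.mem_univ, true_and] at hf
    congr 1
    conv_lhs => rw [← glue_toGH hk h1 hij hf.1.1 hf.1.2 hf.2]
    rw [sum_glue hk h1 hij]

/-- For `1 ≤ i ≤ min(k,ℓ)`, the generating function of `i`-vacant partitions in
the `ℓ × k` rectangle equals
`q^i · qbinom(k,i) · ∑_{j=0}^{ℓ-i} q^{j(k-i+1)} qbinom(i+j-1, j)`. -/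
theorem vacant_partition_gf (k ℓ i : ℕ) (h1 : 1 ≤ i) (hk : i ≤ k) (hl : i ≤ ℓ) :
    ∑ f ∈ Finset.univ.filter
        (fun f : Fin ℓ → Fin (k + 1) => RectPartition ℓ k f ∧ IsVacant i f),
      (X : Polynomial ℤ) ^ (∑ a, (f a : ℕ))
    = X ^ i * qbinom k i *
        ∑ j ∈ Finset.range (ℓ - i + 1),
          X ^ (j * (k - i + 1)) * qbinom (i + j - 1) j := by
  have hq1 : qbinom k i = S i (k - i) := by rw [S_eq]; congr 1; omega
  have hq2 : ∀ j : ℕ, qbinom (i + j - 1) j = S j (i - 1) := by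
    intro j; rw [S_eq]; congr 1; omega
  rw [hq1]
  simp only [hq2]
  have hmaps : ∀ f ∈ Finset.univ.filter
      (fun f : Fin ℓ → Fin (k + 1) => RectPartition ℓ k f ∧ IsVacant i f),
      plen f - i ∈ Finset.range (ℓ - i + 1) := by
    intro f _
    rw [Finset.mem_range]
    have := plen_le f
    omega
  rw [← Finset.sum_fiberwise_of_maps_to hmaps, Finset.mul_sum]
  refine Finset.sum_congr rfl (fun j hj => ?_)
  rw [Finset.mem_range] at hj
  have hij : i + j ≤ ℓ := by omega
  have hfil : (Finset.univ.filter
        (fun f : Fin ℓ → Fin (k + 1) => RectPartition ℓ k f ∧ IsVacant i f)).filter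
      (fun f => plen f - i = j)
      = Finset.univ.filter (fun f : Fin ℓ → Fin (k + 1) =>
        (RectPartition ℓ k f ∧ IsVacant i f) ∧ plen f = i + j) := by
    rw [Finset.filter_filter]
    refine Finset.filter_congr (fun f _ => ?_)
    constructor
    · rintro ⟨hf, hpl⟩
      have := hf.2.1.1
      exact ⟨hf, by omega⟩
    · rintro ⟨hf, hpl⟩
      exact ⟨hf, by omega⟩
  rw [hfil, fiber_eq k ℓ i j h1 hk hij, Finset.sum_product]
  simp only [S, Finset.mul_sum, Finset.sum_mul]
  rw [Finset.sum_comm]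
  refine Finset.sum_congr rfl (fun h _ => Finset.sum_congr rfl (fun g _ => ?_))
  rw [pow_add, pow_add, pow_add]
  ring
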